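/- For any non-increasing integer sequences u = (u_1, …, u_p) and b = (b_1, …, b_y), the decreasingly ordered union u ∪ b (the multiset union of the entries, sorted in non-increasing order) satisfies the generalized majorization u ∪ b ≺' (u, b). -/
import Mathlib


/-- Generalized majorization `g ≺' (d, a)` for 1-indexed integer sequences:
`d` of length `m`, `a` of length `s`, `g` of length `m + s`.
Conventions `d i = +∞` for `i < 1` and `d (m+1) = -∞` are encoded in the
definition of the set whose infimum is `h j`. -/
def GenMaj (m s : ℕ) (d a g : ℕ → ℤ) : Prop :=
  (∀ i, 1 ≤ i → i ≤ m → g (i + s) ≤ d i) ∧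
  (∀ j, 1 ≤ j → j ≤ s →
    ∑ i ∈ Finset.Icc 1 (sInf {i : ℕ | j ≤ i ∧ (m < i - j + 1 ∨ d (i - j + 1) < g i)}), g i
      - ∑ i ∈ Finset.Icc 1
          (sInf {i : ℕ | j ≤ i ∧ (m < i - j + 1 ∨ d (i - j + 1) < g i)} - j), d i
      ≤ ∑ i ∈ Finset.Icc 1 j, a i) ∧
  (∑ i ∈ Finset.Icc 1 (m + s), g i
    = ∑ i ∈ Finset.Icc 1 m, d i + ∑ i ∈ Finset.Icc 1 s, a i)

private lemma chain_le (f : ℕ → ℤ) (n : ℕ)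
    (hf : ∀ i, 1 ≤ i → i < n → f (i + 1) ≤ f i)
    {i k : ℕ} (hi : 1 ≤ i) (hik : i ≤ k) : k ≤ n → f k ≤ f i := by
  induction k, hik using Nat.le_induction with
  | base => exact fun _ => le_refl _
  | succ k hk ih => exact fun hkn => le_trans (hf k (by omega) (by omega)) (ih (by omega))

private lemma mem_le_count (f : ℕ → ℤ) (n : ℕ)
    (hf : ∀ i, 1 ≤ i → i < n → f (i + 1) ≤ f i)
    (P : ℤ → Prop) [DecidablePred P] (hP : ∀ x z : ℤ, x ≤ z → P x → P z)
    {k : ℕ} (hk1 : 1 ≤ k) (hkn : k ≤ n) (hPk : P (f k)) :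
    k ≤ ((Finset.Icc 1 n).filter (fun i => P (f i))).card := by
  have hsub : Finset.Icc 1 k ⊆ (Finset.Icc 1 n).filter (fun i => P (f i)) := by
    intro m hm
    simp only [Finset.mem_Icc] at hm
    simp only [Finset.mem_filter, Finset.mem_Icc]
    exact ⟨⟨hm.1, le_trans hm.2 hkn⟩, hP _ _ (chain_le f n hf hm.1 hm.2 hkn) hPk⟩
  calc k = (Finset.Icc 1 k).card := by rw [Nat.card_Icc]; omega
    _ ≤ _ := Finset.card_le_card hsub

private lemma count_le_imp (f : ℕ → ℤ) (n : ℕ)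
    (hf : ∀ i, 1 ≤ i → i < n → f (i + 1) ≤ f i)
    (P : ℤ → Prop) [DecidablePred P] (hP : ∀ x z : ℤ, x ≤ z → P x → P z)
    {i : ℕ} (hi : 1 ≤ i)
    (hic : i ≤ ((Finset.Icc 1 n).filter (fun i => P (f i))).card) :
    P (f i) := by
  by_contra hnP
  have hsub : (Finset.Icc 1 n).filter (fun i => P (f i)) ⊆ Finset.Icc 1 (i - 1) := by
    intro k hk
    simp only [Finset.mem_filter, Finset.mem_Icc] at hk
    simp only [Finset.mem_Icc]
    refine ⟨hk.1.1, ?_⟩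
    by_contra hki
    exact hnP (hP _ _ (chain_le f n hf hi (by omega) hk.1.2) hk.2)
  have hcard := Finset.card_le_card hsub
  rw [Nat.card_Icc] at hcard
  omega

private lemma count_split (p y : ℕ) (u b g : ℕ → ℤ)
    (hunion : (Finset.Icc 1 (p + y)).val.map g
      = (Finset.Icc 1 p).val.map u + (Finset.Icc 1 y).val.map b)
    (P : ℤ → Prop) [DecidablePred P] :
    ((Finset.Icc 1 (p + y)).filter (fun i => P (g i))).card
      = ((Finset.Icc 1 p).filter (fun i => P (u i))).card
        + ((Finset.Icc 1 y).filter (fun i => P (b i))).card := by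
  have h := congrArg (Multiset.countP P) hunion
  rw [Multiset.countP_add, Multiset.countP_map, Multiset.countP_map,
    Multiset.countP_map] at h
  rw [Finset.card_def, Finset.card_def, Finset.card_def, Finset.filter_val,
    Finset.filter_val, Finset.filter_val]
  exact h

private lemma sum_split (p y : ℕ) (u b g : ℕ → ℤ)
    (hunion : (Finset.Icc 1 (p + y)).val.map g
      = (Finset.Icc 1 p).val.map u + (Finset.Icc 1 y).val.map b)
    (P : ℤ → Prop) [DecidablePred P] :
    ∑ i ∈ (Finset.Icc 1 (p + y)).filter (fun i => P (g i)), g i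
      = ∑ i ∈ (Finset.Icc 1 p).filter (fun i => P (u i)), u i
        + ∑ i ∈ (Finset.Icc 1 y).filter (fun i => P (b i)), b i := by
  have h := congrArg (fun s => (Multiset.filter P s).sum) hunion
  simp only [Multiset.filter_add, Multiset.filter_map, Multiset.sum_add,
    Function.comp] at h
  rw [Finset.sum_eq_multiset_sum, Finset.sum_eq_multiset_sum, Finset.sum_eq_multiset_sum,
    Finset.filter_val, Finset.filter_val, Finset.filter_val]
  exact h

/-- For non-increasing integer sequences `u` (length `p`) and `b` (length `y`),
their decreasingly ordered union `g = u ∪ b` satisfies `g ≺' (u, b)`. -/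
theorem stmt3 (p y : ℕ) (u b g : ℕ → ℤ)
    (hu : ∀ i, 1 ≤ i → i < p → u (i + 1) ≤ u i)
    (hb : ∀ i, 1 ≤ i → i < y → b (i + 1) ≤ b i)
    (hg : ∀ i, 1 ≤ i → i < p + y → g (i + 1) ≤ g i)
    (hunion : (Finset.Icc 1 (p + y)).val.map g
      = (Finset.Icc 1 p).val.map u + (Finset.Icc 1 y).val.map b) :
    GenMaj p y u b g := by
  refine ⟨?_, ?_, ?_⟩
  · -- condition 1
    intro i hi1 hip
    have hPmono : ∀ x z : ℤ, x ≤ z → g (i + y) ≤ x → g (i + y) ≤ z :=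
      fun x z hxz hx => le_trans hx hxz
    have hcg := mem_le_count g (p + y) hg (fun v => g (i + y) ≤ v) hPmono
      (k := i + y) (by omega) (by omega) (le_refl _)
    have hcb : ((Finset.Icc 1 y).filter (fun m => g (i + y) ≤ b m)).card ≤ y := by
      calc _ ≤ (Finset.Icc 1 y).card := Finset.card_filter_le _ _
        _ = y := by rw [Nat.card_Icc]; omega
    have hsplit := count_split p y u b g hunion (fun v => g (i + y) ≤ v)
    beta_reduce at hsplit hcg
    have hcu : i ≤ ((Finset.Icc 1 p).filter (fun m => g (i + y) ≤ u m)).card := by omega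
    exact count_le_imp u p hu (fun v => g (i + y) ≤ v) hPmono hi1 hcu
  · -- condition 2
    intro j hj1 hjy
    set S := {i : ℕ | j ≤ i ∧ (p < i - j + 1 ∨ u (i - j + 1) < g i)} with hSdef
    have hSne : (p + j) ∈ S := ⟨by omega, Or.inl (by omega)⟩
    set H := sInf S with hHdef
    have hHS : H ∈ S := Nat.sInf_mem ⟨_, hSne⟩
    have hHle : H ≤ p + j := Nat.sInf_le hSne
    have hjH : j ≤ H := hHS.1
    have hnotS : ∀ i, j ≤ i → i < H → i - j + 1 ≤ p ∧ g i ≤ u (i - j + 1) := by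
      intro i hji hiH
      have hi' : i ∉ S := Nat.notMem_of_lt_sInf hiH
      simp only [hSdef, Set.mem_setOf_eq, not_and, not_or, not_lt] at hi'
      exact hi' hji
    -- (a)
    have ha' : ∀ m, 1 ≤ m → m ≤ H - j → m ≤ p ∧ g (m + j - 1) ≤ u m := by
      intro m hm1 hmHj
      obtain ⟨hp', hgu⟩ := hnotS (m + j - 1) (by omega) (by omega)
      have heq : m + j - 1 - j + 1 = m := by omega
      rw [heq] at hp' hgu
      exact ⟨hp', hgu⟩
    have ha : ∀ m, 1 ≤ m → m ≤ H - j → m ≤ p ∧ g H ≤ u m := by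
      intro m hm1 hmHj
      obtain ⟨hp', hgu⟩ := ha' m hm1 hmHj
      exact ⟨hp', le_trans (chain_le g (p + y) hg (by omega) (by omega) (by omega)) hgu⟩
    have hHjp : H - j ≤ p := by
      rcases Nat.eq_or_lt_of_le hjH with h' | h'
      · omega
      · exact (ha (H - j) (by omega) (le_refl _)).1
    -- (d)
    have hd : ∀ m, H - j < m → m ≤ p → u m < g H := by
      intro m hm hmp
      have hcase : u (H - j + 1) < g H := by
        rcases hHS.2 with hc | hc
        · omega
        · exact hc
      exact lt_of_le_of_lt (chain_le u p hu (by omega) (by omega) hmp) hcase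
    have hPmono : ∀ x z : ℤ, x ≤ z → g H ≤ x → g H ≤ z :=
      fun x z hxz hx => le_trans hx hxz
    have hPmono' : ∀ x z : ℤ, x ≤ z → g H < x → g H < z :=
      fun x z hxz hx => lt_of_lt_of_le hx hxz
    -- (b)
    have hule : ((Finset.Icc 1 p).filter (fun m => g H ≤ u m)).card ≤ H - j := by
      have hsub : (Finset.Icc 1 p).filter (fun m => g H ≤ u m)
          ⊆ Finset.Icc 1 (H - j) := by
        intro m hm
        simp only [Finset.mem_filter, Finset.mem_Icc] at hm
        simp only [Finset.mem_Icc]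
        refine ⟨hm.1.1, ?_⟩
        by_contra hcon
        exact absurd hm.2 (not_le.mpr (hd m (by omega) hm.1.2))
      calc _ ≤ (Finset.Icc 1 (H - j)).card := Finset.card_le_card hsub
        _ = H - j := by rw [Nat.card_Icc]; omega
    have hgcount := mem_le_count g (p + y) hg (fun v => g H ≤ v) hPmono
      (k := H) (by omega) (by omega) (le_refl _)
    have hsplitle := count_split p y u b g hunion (fun v => g H ≤ v)
    beta_reduce at hsplitle hgcount
    have hbcount : j ≤ ((Finset.Icc 1 y).filter (fun m => g H ≤ b m)).card := by omega
    have hbge : ∀ m, 1 ≤ m → m ≤ j → g H ≤ b m := fun m h1 h2 =>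
      count_le_imp b y hb (fun v => g H ≤ v) hPmono h1 (le_trans h2 hbcount)
    -- (c)
    have hble : ∀ m, j < m → m ≤ y → b m ≤ g H := by
      intro m hjm hmy
      have hbj1 : b (j + 1) ≤ g H := by
        by_contra hcon
        push_neg at hcon
        have hsplit' := count_split p y u b g hunion (fun v => g H < v)
        beta_reduce at hsplit'
        have hNh : ((Finset.Icc 1 (p + y)).filter (fun i => g H < g i)).card < H := by
          by_contra hNh
          push_neg at hNh
          exact absurd (count_le_imp g (p + y) hg (fun v => g H < v) hPmono'
            (i := H) (by omega) hNh) (lt_irrefl _)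
        have hbN : j + 1 ≤ ((Finset.Icc 1 y).filter (fun i => g H < b i)).card :=
          mem_le_count b y hb (fun v => g H < v) hPmono' (by omega) (by omega) hcon
        beta_reduce at hbN
        set N := ((Finset.Icc 1 (p + y)).filter (fun i => g H < g i)).card with hNdef
        by_cases hNj : j ≤ N
        · have hsubN : Finset.Icc 1 (N - j + 1)
              ⊆ (Finset.Icc 1 p).filter (fun i => g H < u i) := by
            intro m' hm'
            simp only [Finset.mem_Icc] at hm'
            obtain ⟨hmp, hum⟩ := ha' m' hm'.1 (by omega)
            have hgm : g H < g (m' + j - 1) := count_le_imp g (p + y) hg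
              (fun v => g H < v) hPmono' (by omega) (by beta_reduce; omega)
            simp only [Finset.mem_filter, Finset.mem_Icc]
            exact ⟨⟨hm'.1, hmp⟩, lt_of_lt_of_le hgm hum⟩
          have hcardN := Finset.card_le_card hsubN
          rw [Nat.card_Icc] at hcardN
          omega
        · omega
      exact le_trans (chain_le b y hb (by omega) (by omega) hmy) hbj1
    -- main equality
    have hfin : ∑ i ∈ Finset.Icc 1 H, g i
        = ∑ i ∈ Finset.Icc 1 (H - j), u i + ∑ i ∈ Finset.Icc 1 j, b i := by
      have hsum := sum_split p y u b g hunion (fun v => g H < v)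
      have hcard := count_split p y u b g hunion (fun v => g H < v)
      beta_reduce at hsum hcard
      have hgeq : (Finset.Icc 1 (p + y)).filter (fun i => g H < g i)
          = (Finset.Icc 1 H).filter (fun i => g H < g i) := by
        ext i
        simp only [Finset.mem_filter, Finset.mem_Icc]
        constructor
        · rintro ⟨⟨h1, h2⟩, h3⟩
          refine ⟨⟨h1, ?_⟩, h3⟩
          by_contra hcon
          exact absurd h3 (not_lt.mpr (chain_le g (p + y) hg (by omega) (by omega) h2))
        · rintro ⟨⟨h1, h2⟩, h3⟩
          exact ⟨⟨h1, by omega⟩, h3⟩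
      have hueq : (Finset.Icc 1 p).filter (fun i => g H < u i)
          = (Finset.Icc 1 (H - j)).filter (fun i => g H < u i) := by
        ext i
        simp only [Finset.mem_filter, Finset.mem_Icc]
        constructor
        · rintro ⟨⟨h1, h2⟩, h3⟩
          refine ⟨⟨h1, ?_⟩, h3⟩
          by_contra hcon
          exact absurd h3 (not_lt.mpr (le_of_lt (hd i (by omega) h2)))
        · rintro ⟨⟨h1, h2⟩, h3⟩
          exact ⟨⟨h1, by omega⟩, h3⟩
      have hbeq : (Finset.Icc 1 y).filter (fun i => g H < b i)
          = (Finset.Icc 1 j).filter (fun i => g H < b i) := by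
        ext i
        simp only [Finset.mem_filter, Finset.mem_Icc]
        constructor
        · rintro ⟨⟨h1, h2⟩, h3⟩
          refine ⟨⟨h1, ?_⟩, h3⟩
          by_contra hcon
          exact absurd h3 (not_lt.mpr (hble i (by omega) h2))
        · rintro ⟨⟨h1, h2⟩, h3⟩
          exact ⟨⟨h1, by omega⟩, h3⟩
      rw [hgeq, hueq, hbeq] at hsum hcard
      -- split each full sum
      have hsg := Finset.sum_filter_add_sum_filter_not (Finset.Icc 1 H)
        (fun i => g H < g i) g
      have hsu := Finset.sum_filter_add_sum_filter_not (Finset.Icc 1 (H - j))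
        (fun i => g H < u i) u
      have hsb := Finset.sum_filter_add_sum_filter_not (Finset.Icc 1 j)
        (fun i => g H < b i) b
      have hcg := Finset.card_filter_add_card_filter_not
        (s := Finset.Icc 1 H) (fun i => g H < g i)
      have hcu := Finset.card_filter_add_card_filter_not
        (s := Finset.Icc 1 (H - j)) (fun i => g H < u i)
      have hcb := Finset.card_filter_add_card_filter_not
        (s := Finset.Icc 1 j) (fun i => g H < b i)
      -- constant parts
      have hconstg : ∑ i ∈ (Finset.Icc 1 H).filter (fun i => ¬ g H < g i), g i
          = ((Finset.Icc 1 H).filter (fun i => ¬ g H < g i)).card • g H := by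
        rw [← Finset.sum_const]
        refine Finset.sum_congr rfl ?_
        intro i hi
        simp only [Finset.mem_filter, Finset.mem_Icc, not_lt] at hi
        have : g H ≤ g i := chain_le g (p + y) hg (by omega) hi.1.2 (by omega)
        omega
      have hconstu : ∑ i ∈ (Finset.Icc 1 (H - j)).filter (fun i => ¬ g H < u i), u i
          = ((Finset.Icc 1 (H - j)).filter (fun i => ¬ g H < u i)).card • g H := by
        rw [← Finset.sum_const]
        refine Finset.sum_congr rfl ?_
        intro i hi
        simp only [Finset.mem_filter, Finset.mem_Icc, not_lt] at hi
        have := (ha i hi.1.1 hi.1.2).2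
        omega
      have hconstb : ∑ i ∈ (Finset.Icc 1 j).filter (fun i => ¬ g H < b i), b i
          = ((Finset.Icc 1 j).filter (fun i => ¬ g H < b i)).card • g H := by
        rw [← Finset.sum_const]
        refine Finset.sum_congr rfl ?_
        intro i hi
        simp only [Finset.mem_filter, Finset.mem_Icc, not_lt] at hi
        have := hbge i hi.1.1 hi.1.2
        omega
      have hcardIccH : (Finset.Icc 1 H).card = H := by rw [Nat.card_Icc]; omega
      have hcardIccHj : (Finset.Icc 1 (H - j)).card = H - j := by rw [Nat.card_Icc]; omega
      have hcardIccj : (Finset.Icc 1 j).card = j := by rw [Nat.card_Icc]; omega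
      rw [hcardIccH] at hcg
      rw [hcardIccHj] at hcu
      rw [hcardIccj] at hcb
      -- card of the not-parts
      have hnotcard : ((Finset.Icc 1 H).filter (fun i => ¬ g H < g i)).card
          = ((Finset.Icc 1 (H - j)).filter (fun i => ¬ g H < u i)).card
            + ((Finset.Icc 1 j).filter (fun i => ¬ g H < b i)).card := by omega
      rw [← hsg, ← hsu, ← hsb, hconstg, hconstu, hconstb, hsum, hnotcard]
      push_cast [add_nsmul]
      ring
    rw [hfin]
    simp
  · -- condition 3
    have h := congrArg Multiset.sum hunion
    rw [Multiset.sum_add] at h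
    rw [Finset.sum_eq_multiset_sum, Finset.sum_eq_multiset_sum, Finset.sum_eq_multiset_sum]
    exact h
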